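/- For every ℓ ≥ 1, the expected number of transmissions E(ℓ,2) to recover a length-ℓ sequence of 2-composite symbols satisfies 1 + log_2(ℓ) + 1/(ℓ ln 2) ≤ E(ℓ,2) ≤ 2 + log_2(ℓ) + 1/ln 2. -/

import Mathlib

open MeasureTheory ProbabilityTheory Finset

open scoped ENNReal

namespace Stmt4Aux

/-- harmonic-like sum over `ln 2`. -/
noncomputable def L (ℓ : ℕ) : ℝ := (∑ i ∈ Finset.range ℓ, (1:ℝ)/(i+1)) / Real.log 2

noncomputable def F (ℓ : ℕ) (x : ℝ) : ℝ :=
  (∑ i ∈ Finset.range ℓ, (1 - (2:ℝ) ^ (-x)) ^ (i+1) / (i+1)) / Real.log 2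

noncomputable def f (ℓ : ℕ) (x : ℝ) : ℝ := 1 - (1 - (2:ℝ) ^ (-x)) ^ ℓ

noncomputable def g (ℓ k : ℕ) : ℝ := 1 - (1 - (1/2:ℝ)^k)^ℓ

lemma f_nat (ℓ k : ℕ) : f ℓ (k : ℝ) = g ℓ k := by
  unfold f g
  rw [Real.rpow_neg (by norm_num), Real.rpow_natCast]
  simp [one_div, inv_pow]

lemma hasDerivAt_F (ℓ : ℕ) (x : ℝ) : HasDerivAt (F ℓ) (f ℓ x) x := by
  have h2 : (0:ℝ) < 2 := by norm_num
  have hu : HasDerivAt (fun x : ℝ => 1 - (2:ℝ) ^ (-x)) ((2:ℝ) ^ (-x) * Real.log 2) x := by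
    have h1 : HasDerivAt (fun y : ℝ => (2:ℝ) ^ y) ((2:ℝ) ^ (-x) * Real.log 2) (-x) :=
      (Real.hasStrictDerivAt_const_rpow h2 (-x)).hasDerivAt
    have h3 := h1.comp x (hasDerivAt_neg x)
    have h4 := (hasDerivAt_const x (1:ℝ)).sub h3
    exact h4.congr_deriv (by ring)
  set u : ℝ := 1 - (2:ℝ) ^ (-x) with hu_def
  have hterm : ∀ i : ℕ, HasDerivAt (fun x : ℝ => (1 - (2:ℝ) ^ (-x)) ^ (i+1) / (i+1))
      (u ^ i * ((2:ℝ) ^ (-x) * Real.log 2)) x := by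
    intro i
    have := (hu.pow (i+1)).div_const (i+1)
    exact this.congr_deriv (by rw [hu_def, Nat.add_sub_cancel]; push_cast; field_simp)
  have hsum : HasDerivAt (fun x : ℝ => ∑ i ∈ Finset.range ℓ, (1 - (2:ℝ) ^ (-x)) ^ (i+1) / (i+1))
      (∑ i ∈ Finset.range ℓ, u ^ i * ((2:ℝ) ^ (-x) * Real.log 2)) x :=
    HasDerivAt.fun_sum (fun i _ => hterm i)
  have hF := hsum.div_const (Real.log 2)
  have hlog : Real.log 2 ≠ 0 := by
    positivity
  refine hF.congr_deriv ?_
  unfold f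
  rw [← Finset.sum_mul]
  have hx2 : (2:ℝ) ^ (-x) = 1 - u := by rw [hu_def]; ring
  field_simp
  have := geom_sum_mul u ℓ
  rw [← hu_def, hx2]
  linear_combination -this

lemma u_mem {x : ℝ} (hx : 0 ≤ x) : 0 ≤ 1 - (2:ℝ) ^ (-x) ∧ (1 - (2:ℝ) ^ (-x)) ≤ 1 := by
  have h1 : (2:ℝ) ^ (-x) ≤ 1 :=
    Real.rpow_le_one_of_one_le_of_nonpos (by norm_num) (by linarith)
  have h2 : (0:ℝ) < (2:ℝ) ^ (-x) := Real.rpow_pos_of_pos (by norm_num) _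
  constructor <;> linarith

lemma f_anti (ℓ : ℕ) {a b : ℝ} (ha : 0 ≤ a) (hab : a ≤ b) : f ℓ b ≤ f ℓ a := by
  unfold f
  have h1 : (2:ℝ) ^ (-b) ≤ (2:ℝ) ^ (-a) :=
    Real.rpow_le_rpow_of_exponent_le (by norm_num) (by linarith)
  have h2 := (u_mem ha).1
  have : (1 - (2:ℝ) ^ (-a)) ^ ℓ ≤ (1 - (2:ℝ) ^ (-b)) ^ ℓ :=
    pow_le_pow_left₀ h2 (by linarith) ℓ
  linarith

lemma f_le_one (ℓ : ℕ) {x : ℝ} (hx : 0 ≤ x) : f ℓ x ≤ 1 := by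
  unfold f
  have := pow_nonneg (u_mem hx).1 ℓ
  linarith

/-- MVT step: `f ℓ (k+1) ≤ F ℓ (k+1) - F ℓ k ≤ f ℓ k`. -/
lemma step (ℓ : ℕ) (k : ℕ) :
    f ℓ ((k:ℝ)+1) ≤ F ℓ ((k:ℝ)+1) - F ℓ k ∧ F ℓ ((k:ℝ)+1) - F ℓ k ≤ f ℓ k := by
  have hk : ((k:ℝ)) < ((k:ℝ)+1) := by linarith
  obtain ⟨c, hc, hceq⟩ := exists_hasDerivAt_eq_slope (F ℓ) (f ℓ) hk
    (fun x _ => (hasDerivAt_F ℓ x).continuousAt.continuousWithinAt)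
    (fun x _ => hasDerivAt_F ℓ x)
  have hc0 : (0:ℝ) ≤ (k:ℝ) := Nat.cast_nonneg k
  have h1 : f ℓ ((k:ℝ)+1) ≤ f ℓ c := f_anti ℓ (by linarith [hc.1]) (le_of_lt hc.2)
  have h2 : f ℓ c ≤ f ℓ (k:ℝ) := f_anti ℓ hc0 (le_of_lt hc.1)
  have heq : f ℓ c = F ℓ ((k:ℝ)+1) - F ℓ k := by
    rw [hceq]; field_simp; ring
  constructor <;> linarith

lemma F_zero (ℓ : ℕ) : F ℓ 0 = 0 := by
  unfold F
  norm_num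

lemma F_le_L (ℓ : ℕ) (x : ℝ) (hx : 0 ≤ x) : F ℓ x ≤ L ℓ := by
  unfold F L
  have hlog : (0:ℝ) < Real.log 2 := Real.log_pos (by norm_num)
  apply div_le_div_of_nonneg_right ?_ hlog.le
  · apply Finset.sum_le_sum
    intro i _
    have h1 := (u_mem hx).1
    have h2 := (u_mem hx).2
    have hle : (1 - (2:ℝ) ^ (-x)) ^ (i+1) ≤ 1 := pow_le_one₀ h1 h2
    have : (0:ℝ) < (i:ℝ) + 1 := by positivity
    rw [div_le_div_iff₀ this this]
    nlinarith

lemma F_one_le (ℓ : ℕ) : F ℓ 1 ≤ 1 := by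
  have h := (step ℓ 0).2
  have h0 : F ℓ 0 = 0 := F_zero ℓ
  have h1 : f ℓ ((0:ℕ):ℝ) ≤ 1 := f_le_one ℓ (by norm_num)
  norm_num at h h1
  linarith

lemma F_nonneg (ℓ : ℕ) {x : ℝ} (hx : 0 ≤ x) : 0 ≤ F ℓ x := by
  unfold F
  have hlog : (0:ℝ) < Real.log 2 := Real.log_pos (by norm_num)
  apply div_nonneg ?_ hlog.le
  apply Finset.sum_nonneg
  intro i _
  have h1 := (u_mem hx).1
  positivity

lemma tendsto_F (ℓ : ℕ) : Filter.Tendsto (fun N : ℕ => F ℓ N) Filter.atTop (nhds (L ℓ)) := by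
  have hΦ : Continuous (fun t : ℝ => (∑ i ∈ Finset.range ℓ, (1 - t) ^ (i+1) / (i+1)) / Real.log 2) := by
    apply Continuous.div_const
    apply continuous_finset_sum
    intro i _
    exact ((continuous_const.sub continuous_id).pow (i+1)).div_const _
  have h0 : Filter.Tendsto (fun N : ℕ => (2:ℝ) ^ (-(N:ℝ))) Filter.atTop (nhds 0) := by
    have hpow : ∀ N : ℕ, (2:ℝ) ^ (-(N:ℝ)) = (1/2:ℝ)^N := by
      intro N
      rw [Real.rpow_neg (by norm_num), Real.rpow_natCast]
      simp [one_div, inv_pow]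
    simp_rw [hpow]
    exact tendsto_pow_atTop_nhds_zero_of_lt_one (by norm_num) (by norm_num)
  have hc := (hΦ.tendsto 0).comp h0
  simp only [Function.comp_def] at hc
  convert hc using 2 with N
  · rfl
  unfold L
  norm_num

lemma g_nonneg (ℓ m : ℕ) : 0 ≤ g ℓ m := by
  unfold g
  have h1 : (0:ℝ) ≤ (1/2:ℝ)^m := by positivity
  have h2 : (1/2:ℝ)^m ≤ 1 := pow_le_one₀ (by norm_num) (by norm_num)
  have := pow_le_one₀ (a := 1 - (1/2:ℝ)^m) (by linarith) (by linarith) (n := ℓ)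
  linarith

lemma g_le (ℓ m : ℕ) : g ℓ m ≤ ℓ * (1/2:ℝ)^m := by
  unfold g
  have h2 : (1/2:ℝ)^m ≤ 1 := pow_le_one₀ (by norm_num) (by norm_num)
  have hb := one_add_mul_le_pow (a := -((1/2:ℝ)^m)) (by linarith) ℓ
  have : (1 + -((1/2:ℝ)^m)) = 1 - (1/2:ℝ)^m := by ring
  rw [this] at hb
  nlinarith

lemma summable_g (ℓ : ℕ) : Summable (fun k : ℕ => g ℓ (k+1)) := by
  apply Summable.of_nonneg_of_le (fun k => g_nonneg ℓ (k+1)) (fun k => g_le ℓ (k+1))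
  have : Summable (fun k : ℕ => (ℓ:ℝ) * ((1/2:ℝ) * (1/2:ℝ)^k)) := by
    apply Summable.mul_left
    apply Summable.mul_left
    exact summable_geometric_of_lt_one (by norm_num) (by norm_num)
  convert this using 2 with k
  ring

lemma sum_g_le (ℓ N : ℕ) : ∑ k ∈ Finset.range N, g ℓ (k+1) ≤ F ℓ N := by
  have h : ∀ k ∈ Finset.range N, g ℓ (k+1) ≤ F ℓ ((k:ℝ)+1) - F ℓ (k:ℝ) := by
    intro k _
    have := (step ℓ k).1
    rw [← f_nat]
    push_cast
    exact this
  calc ∑ k ∈ Finset.range N, g ℓ (k+1)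
      ≤ ∑ k ∈ Finset.range N, (F ℓ ((k:ℝ)+1) - F ℓ (k:ℝ)) := Finset.sum_le_sum h
    _ = F ℓ N - F ℓ 0 := by
        have := Finset.sum_range_sub (fun k : ℕ => F ℓ (k:ℝ)) N
        simp only [Nat.cast_add, Nat.cast_one] at this ⊢
        convert this using 1
        norm_num
    _ = F ℓ N := by rw [F_zero]; ring

lemma le_sum_g (ℓ N : ℕ) : F ℓ ((N:ℝ)+1) - F ℓ 1 ≤ ∑ k ∈ Finset.range N, g ℓ (k+1) := by
  have h : ∀ k ∈ Finset.range N, F ℓ ((k:ℝ)+1+1) - F ℓ ((k:ℝ)+1) ≤ g ℓ (k+1) := by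
    intro k _
    have := (step ℓ (k+1)).2
    rw [← f_nat]
    push_cast at this ⊢
    linarith
  calc F ℓ ((N:ℝ)+1) - F ℓ 1
      = ∑ k ∈ Finset.range N, (F ℓ ((k:ℝ)+1+1) - F ℓ ((k:ℝ)+1)) := by
        have := Finset.sum_range_sub (fun k : ℕ => F ℓ ((k:ℝ)+1)) N
        simp only [Nat.cast_add, Nat.cast_one] at this
        rw [this]
        norm_num
    _ ≤ ∑ k ∈ Finset.range N, g ℓ (k+1) := Finset.sum_le_sum h

lemma S_le_L (ℓ : ℕ) : ∑' k : ℕ, g ℓ (k+1) ≤ L ℓ := by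
  apply Summable.tsum_le_of_sum_le (summable_g ℓ)
  intro s
  obtain ⟨N, hN⟩ := Finset.exists_nat_subset_range s
  calc ∑ k ∈ s, g ℓ (k+1)
      ≤ ∑ k ∈ Finset.range N, g ℓ (k+1) :=
        Finset.sum_le_sum_of_subset_of_nonneg hN (fun k _ _ => g_nonneg ℓ (k+1))
    _ ≤ F ℓ N := sum_g_le ℓ N
    _ ≤ L ℓ := F_le_L ℓ N (Nat.cast_nonneg N)

lemma L_sub_one_le_S (ℓ : ℕ) : L ℓ - 1 ≤ ∑' k : ℕ, g ℓ (k+1) := by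
  have htend : Filter.Tendsto (fun N : ℕ => F ℓ ((N:ℝ)+1)) Filter.atTop (nhds (L ℓ)) := by
    have := (tendsto_F ℓ).comp (Filter.tendsto_add_atTop_nat 1)
    simp only [Function.comp_def] at this
    convert this using 2 with N
    push_cast
    ring
  have hbound : ∀ N : ℕ, F ℓ ((N:ℝ)+1) ≤ (∑' k : ℕ, g ℓ (k+1)) + 1 := by
    intro N
    have h1 := le_sum_g ℓ N
    have h2 : ∑ k ∈ Finset.range N, g ℓ (k+1) ≤ ∑' k : ℕ, g ℓ (k+1) :=
      Summable.sum_le_tsum _ (fun k _ => g_nonneg ℓ (k+1)) (summable_g ℓ)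
    have h3 := F_one_le ℓ
    linarith
  have := le_of_tendsto htend (Filter.Eventually.of_forall hbound)
  linarith

lemma sum_eq_harmonic (ℓ : ℕ) : ∑ i ∈ Finset.range ℓ, (1:ℝ)/(i+1) = (harmonic ℓ : ℝ) := by
  unfold harmonic
  push_cast
  simp [one_div]

lemma harmonic_lb {ℓ : ℕ} (hℓ : 1 ≤ ℓ) : Real.log ℓ + 1/ℓ ≤ (harmonic ℓ : ℝ) := by
  obtain ⟨n, rfl⟩ : ∃ n, ℓ = n + 1 := ⟨ℓ - 1, by omega⟩
  have h1 := log_add_one_le_harmonic n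
  have h2 : (harmonic (n+1) : ℝ) = (harmonic n : ℝ) + 1/((n:ℝ)+1) := by
    rw [harmonic_succ]
    push_cast
    ring
  rw [h2]
  push_cast at h1 ⊢
  linarith

/-- Main analytic bounds on `S = ∑ₖ g ℓ (k+1)`. -/
lemma S_bounds (ℓ : ℕ) (hℓ : 1 ≤ ℓ) :
    Real.logb 2 ℓ + 1/(ℓ * Real.log 2) - 1 ≤ ∑' k : ℕ, g ℓ (k+1) ∧
    ∑' k : ℕ, g ℓ (k+1) ≤ Real.logb 2 ℓ + 1/Real.log 2 := by
  have hlog : (0:ℝ) < Real.log 2 := Real.log_pos (by norm_num)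
  have hl0 : (0:ℝ) < (ℓ:ℝ) := by exact_mod_cast hℓ
  have hL : L ℓ = (harmonic ℓ : ℝ) / Real.log 2 := by
    unfold L
    rw [sum_eq_harmonic]
  have hub := harmonic_le_one_add_log ℓ
  have hlb := harmonic_lb hℓ
  have hlogb : Real.logb 2 ℓ = Real.log ℓ / Real.log 2 := rfl
  constructor
  · have h1 := L_sub_one_le_S ℓ
    have h2 : (Real.log ℓ + 1/ℓ) / Real.log 2 ≤ L ℓ := by
      rw [hL]
      exact div_le_div_of_nonneg_right hlb hlog.le
    rw [hlogb]
    have h3 : (Real.log ℓ + 1/ℓ) / Real.log 2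
        = Real.log ℓ / Real.log 2 + 1/(ℓ * Real.log 2) := by
      field_simp
    linarith
  · have h1 := S_le_L ℓ
    have h2 : L ℓ ≤ (1 + Real.log ℓ) / Real.log 2 := by
      rw [hL]
      exact div_le_div_of_nonneg_right hub hlog.le
    rw [hlogb]
    have h3 : (1 + Real.log ℓ) / Real.log 2
        = Real.log ℓ / Real.log 2 + 1/Real.log 2 := by
      field_simp
      ring
    linarith

end Stmt4Aux

/-- `E(ℓ,2) = E[max_i X i]`, where the `X i = 1 + Y i` are independent with
`Y i` geometric of success probability `1/2` (so `P[X i = k+1] = (1/2)^k` for `k ≥ 1`),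
satisfies `1 + log₂ ℓ + 1/(ℓ ln 2) ≤ E(ℓ,2) ≤ 2 + log₂ ℓ + 1/ln 2`. -/
theorem stmt_4 {Ω : Type*} [MeasurableSpace Ω] (μ : Measure Ω) [IsProbabilityMeasure μ]
    (ℓ : ℕ) (hℓ : 1 ≤ ℓ) (X : Fin ℓ → Ω → ℕ)
    (hmeas : ∀ i, Measurable (X i))
    (hindep : iIndepFun X μ)
    (hdist : ∀ i k, 1 ≤ k → μ {ω | X i ω = k + 1} = ENNReal.ofReal ((1 / 2 : ℝ) ^ k)) :
    1 + Real.logb 2 ℓ + 1 / (ℓ * Real.log 2)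
        ≤ ∫ ω, ((univ.sup fun i => X i ω : ℕ) : ℝ) ∂μ
      ∧ ∫ ω, ((univ.sup fun i => X i ω : ℕ) : ℝ) ∂μ
        ≤ 2 + Real.logb 2 ℓ + 1 / Real.log 2 := by
  classical
  set M : Ω → ℕ := fun ω => univ.sup fun i => X i ω with hM_def
  have i0 : Fin ℓ := ⟨0, hℓ⟩
  have hℓ0 : ℓ ≠ 0 := by omega
  -- measurability of M
  have hMmeas : Measurable M := by
    have h1 : M = fun ω => univ.sup' (show (univ : Finset (Fin ℓ)).Nonempty from ⟨i0, mem_univ i0⟩) fun i => X i ω := by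
      funext ω
      rw [Finset.sup'_eq_sup]
    rw [h1]
    have h2 := Finset.measurable_sup' (s := (univ : Finset (Fin ℓ)))
      (show (univ : Finset (Fin ℓ)).Nonempty from ⟨i0, mem_univ i0⟩) (f := X) (fun i _ => hmeas i)
    convert h2 using 1
    funext ω
    rw [Finset.sup'_apply]
  have hMset : ∀ m : ℕ, MeasurableSet {ω | m < M ω} := fun m =>
    hMmeas measurableSet_Ioi
  -- tail distribution of each X i
  have htail : ∀ (i : Fin ℓ) (m : ℕ), 1 ≤ m →
      μ {ω | m < X i ω} = ENNReal.ofReal ((1/2:ℝ)^(m-1)) := by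
    intro i m hm
    have hset : {ω | m < X i ω} = ⋃ j : ℕ, {ω | X i ω = (m + j) + 1} := by
      ext ω
      simp only [Set.mem_setOf_eq, Set.mem_iUnion]
      constructor
      · intro h
        exact ⟨X i ω - 1 - m, by omega⟩
      · rintro ⟨j, hj⟩; omega
    have hdisj : Pairwise (Function.onFun Disjoint
        fun j : ℕ => {ω | X i ω = (m + j) + 1}) := by
      intro a b hab
      rw [Function.onFun, Set.disjoint_left]
      intro ω h1 h2
      simp only [Set.mem_setOf_eq] at h1 h2
      omega
    have hms : ∀ j : ℕ, MeasurableSet {ω | X i ω = (m + j) + 1} := fun j =>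
      hmeas i (measurableSet_singleton ((m + j) + 1))
    rw [hset, measure_iUnion hdisj hms]
    have hval : ∀ j : ℕ, μ {ω | X i ω = (m + j) + 1}
        = ENNReal.ofReal ((1/2:ℝ)^m * (1/2:ℝ)^j) := by
      intro j
      rw [hdist i (m + j) (by omega), pow_add]
    simp_rw [hval]
    have hsummable : Summable (fun j : ℕ => (1/2:ℝ)^m * (1/2:ℝ)^j) :=
      (summable_geometric_of_lt_one (by norm_num) (by norm_num)).mul_left _
    rw [← ENNReal.ofReal_tsum_of_nonneg (fun j => by positivity) hsummable]
    congr 1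
    rw [tsum_mul_left, tsum_geometric_two]
    obtain ⟨m', rfl⟩ : ∃ m', m = m' + 1 := ⟨m - 1, by omega⟩
    simp only [Nat.add_sub_cancel]
    rw [pow_succ]
    ring
  -- cdf of each X i
  have hcdf : ∀ (i : Fin ℓ) (m : ℕ), 1 ≤ m →
      μ {ω | X i ω ≤ m} = ENNReal.ofReal (1 - (1/2:ℝ)^(m-1)) := by
    intro i m hm
    have hc : {ω | X i ω ≤ m} = {ω | m < X i ω}ᶜ := by
      ext ω
      simp [not_lt]
    rw [hc, prob_compl_eq_one_sub (show MeasurableSet {ω | m < X i ω} from hmeas i measurableSet_Ioi), htail i m hm]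
    rw [← ENNReal.ofReal_one, ← ENNReal.ofReal_sub _ (by positivity)]
  -- tail of the max
  have hg : ∀ m : ℕ, μ {ω | m < M ω} = ENNReal.ofReal (Stmt4Aux.g ℓ (m-1)) := by
    intro m
    have hg0 : Stmt4Aux.g ℓ 0 = 1 := by
      unfold Stmt4Aux.g
      norm_num [zero_pow hℓ0]
    rcases Nat.eq_zero_or_pos m with rfl | hm
    · have hsub : {ω | 1 < X i0 ω} ⊆ {ω | 0 < M ω} := by
        intro ω h
        simp only [Set.mem_setOf_eq] at h ⊢
        have hle : X i0 ω ≤ M ω := Finset.le_sup (f := fun i => X i ω) (mem_univ i0)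
        omega
      have h1 : μ {ω | 1 < X i0 ω} = 1 := by
        rw [htail i0 1 le_rfl]
        norm_num
      have h2 : (1:ℝ≥0∞) ≤ μ {ω | 0 < M ω} := h1 ▸ measure_mono hsub
      have h3 : μ {ω | 0 < M ω} = 1 := le_antisymm prob_le_one h2
      rw [h3]
      simp [hg0]
    · have hInter : {ω | M ω ≤ m} = ⋂ i, {ω | X i ω ≤ m} := by
        ext ω
        simp only [Set.mem_setOf_eq, Set.mem_iInter, hM_def, Finset.sup_le_iff, mem_univ,
          forall_true_left]
      have hprod : μ {ω | M ω ≤ m} = ∏ i : Fin ℓ, μ {ω | X i ω ≤ m} := by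
        rw [hInter]
        exact hindep.meas_iInter (fun i => ⟨Set.Iic m, measurableSet_Iic, rfl⟩)
      have hnn : (0:ℝ) ≤ 1 - (1/2:ℝ)^(m-1) := by
        have : (1/2:ℝ)^(m-1) ≤ 1 := pow_le_one₀ (by norm_num) (by norm_num)
        linarith
      have hp : μ {ω | M ω ≤ m} = ENNReal.ofReal ((1 - (1/2:ℝ)^(m-1))^ℓ) := by
        rw [hprod]
        have : ∀ i : Fin ℓ, μ {ω | X i ω ≤ m} = ENNReal.ofReal (1 - (1/2:ℝ)^(m-1)) :=
          fun i => hcdf i m hm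
        simp_rw [this]
        rw [Finset.prod_const, Finset.card_univ, Fintype.card_fin,
          ← ENNReal.ofReal_pow hnn]
      have hcomp : {ω | m < M ω} = {ω | M ω ≤ m}ᶜ := by
        ext ω
        simp [not_le]
      rw [hcomp, prob_compl_eq_one_sub (show MeasurableSet {ω | M ω ≤ m} from hMmeas measurableSet_Iic), hp]
      rw [← ENNReal.ofReal_one, ← ENNReal.ofReal_sub _ (by positivity)]
      rfl
  -- lintegral of M as a sum of tails
  have hlint : ∫⁻ ω, (M ω : ℝ≥0∞) ∂μ = ∑' m : ℕ, μ {ω | m < M ω} := by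
    have hkey : ∀ ω, ((M ω : ℝ≥0∞))
        = ∑' m : ℕ, Set.indicator {ω' | m < M ω'} (fun _ => (1:ℝ≥0∞)) ω := by
      intro ω
      rw [tsum_eq_sum (s := Finset.range (M ω))
        (fun m hm => Set.indicator_of_notMem (by simpa using hm) _)]
      have hone : ∀ m ∈ Finset.range (M ω),
          Set.indicator {ω' | m < M ω'} (fun _ => (1:ℝ≥0∞)) ω = 1 := fun m hm =>
        Set.indicator_of_mem (by simpa using Finset.mem_range.mp hm) _
      rw [Finset.sum_congr rfl hone, Finset.sum_const, Finset.card_range]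
      simp
    calc ∫⁻ ω, (M ω : ℝ≥0∞) ∂μ
        = ∫⁻ ω, ∑' m : ℕ, Set.indicator {ω' | m < M ω'} (fun _ => (1:ℝ≥0∞)) ω ∂μ :=
          lintegral_congr hkey
      _ = ∑' m : ℕ, ∫⁻ ω, Set.indicator {ω' | m < M ω'} (fun _ => (1:ℝ≥0∞)) ω ∂μ :=
          lintegral_tsum (fun m => (measurable_const.indicator (hMset m)).aemeasurable)
      _ = ∑' m : ℕ, μ {ω | m < M ω} := by
          congr 1
          funext m
          exact lintegral_indicator_one (hMset m)
  -- value of the sum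
  set S : ℝ := ∑' k : ℕ, Stmt4Aux.g ℓ (k+1) with hS_def
  have hS_nonneg : 0 ≤ S :=
    tsum_nonneg (fun k => Stmt4Aux.g_nonneg ℓ (k+1))
  have hg0 : Stmt4Aux.g ℓ 0 = 1 := by
    unfold Stmt4Aux.g
    norm_num [zero_pow hℓ0]
  have hlval : ∑' m : ℕ, μ {ω | m < M ω} = 2 + ENNReal.ofReal S := by
    simp_rw [hg]
    rw [tsum_eq_zero_add' ENNReal.summable]
    rw [tsum_eq_zero_add' ENNReal.summable]
    have e0 : (0 - 1 : ℕ) = 0 := rfl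
    have e1 : (0 + 1 - 1 : ℕ) = 0 := rfl
    have e2 : ∀ k : ℕ, (k + 1 + 1 - 1 : ℕ) = k + 1 := fun k => rfl
    simp only [e0, e1, e2, hg0, ENNReal.ofReal_one]
    rw [← ENNReal.ofReal_tsum_of_nonneg (fun k => Stmt4Aux.g_nonneg ℓ (k+1))
      (Stmt4Aux.summable_g ℓ), ← hS_def, ← add_assoc]
    norm_num
  -- Bochner integral
  have hint : ∫ ω, ((M ω : ℕ) : ℝ) ∂μ = 2 + S := by
    rw [integral_eq_lintegral_of_nonneg_ae
      (Filter.Eventually.of_forall fun ω => Nat.cast_nonneg (M ω))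
      ((show Measurable fun ω => ((M ω : ℕ) : ℝ) from measurable_from_top.comp hMmeas).aestronglyMeasurable)]
    rw [show ∫⁻ ω, ENNReal.ofReal ((M ω : ℕ) : ℝ) ∂μ = ∫⁻ ω, ((M ω : ℕ) : ℝ≥0∞) ∂μ from
      lintegral_congr fun ω => ENNReal.ofReal_natCast _]
    rw [hlint, hlval]
    rw [ENNReal.toReal_add (by norm_num) ENNReal.ofReal_ne_top]
    norm_num [ENNReal.toReal_ofReal hS_nonneg]
  obtain ⟨hlow, hhigh⟩ := Stmt4Aux.S_bounds ℓ hℓ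
  rw [← hS_def] at hlow hhigh
  constructor
  · calc 1 + Real.logb 2 ℓ + 1 / (ℓ * Real.log 2) ≤ 2 + S := by linarith
      _ = ∫ ω, ((M ω : ℕ) : ℝ) ∂μ := hint.symm
  · calc ∫ ω, ((M ω : ℕ) : ℝ) ∂μ = 2 + S := hint
      _ ≤ 2 + Real.logb 2 ℓ + 1 / Real.log 2 := by linarith
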